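/- For the asymmetric random walk with 0 < q < p, p + q = 1, for 0 < α < β < 1, setting x_N = ⌊αN⌋ and y_N = ⌊βN⌋, the probability that y_N is visited an odd number of times before exit converges to 1/(2 − (p − q)): lim_{N→∞} P_{x_N}(G(y_N) ≡ 1 mod 2) = 1/(2 − (p − q)). -/

import Mathlib

open Filter Topology

/-- Position of the nearest-neighbor walk after the steps `w` (`true` = one step right,
`false` = one step left), started from `x`. -/
def walkPos (x : ℤ) (w : List Bool) : ℤ :=
  x + (w.count true : ℤ) - (w.count false : ℤ)

/-- `w` is the step sequence of a trajectory on `{0, 1, …, N}` started at `x` and run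
exactly until the exit time `τ_N = T_0 ∧ T_N`: all positions strictly before the last
step lie strictly inside `(0, N)`, and the final position is `0` or `N`. -/
def IsExitPath (N : ℕ) (x : ℤ) (w : List Bool) : Prop :=
  (∀ k < w.length, 0 < walkPos x (w.take k) ∧ walkPos x (w.take k) < (N : ℤ)) ∧
    (walkPos x w = 0 ∨ walkPos x w = (N : ℤ))

/-- Probability weight of the step sequence `w` when each step goes right with
probability `p` and left with probability `1 - p`, independently. -/
noncomputable def wt (p : ℝ) (w : List Bool) : ℝ :=
  p ^ w.count true * (1 - p) ^ w.count false

/-- `prob N p x S` is the probability, for the walk on `{0, …, N}` with right-step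
probability `p` started at `x` and stopped at the exit time `τ_N`, that its stopped
trajectory (recorded as the step sequence up to time `τ_N`) satisfies `S`. -/
noncomputable def prob (N : ℕ) (p : ℝ) (x : ℤ) (S : List Bool → Prop) : ℝ :=
  ∑' w : List Bool, Set.indicator {w | IsExitPath N x w ∧ S w} (wt p) w

/-- Expectation of `f` of the stopped trajectory for the walk started at `x`. -/
noncomputable def expect (N : ℕ) (p : ℝ) (x : ℤ) (f : List Bool → ℝ) : ℝ :=
  ∑' w : List Bool, Set.indicator {w | IsExitPath N x w} (fun w => wt p w * f w) w

/-- Probability for the walk whose starting point is uniformly distributed on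
`{0, 1, …, N}`; the event `S` may depend on the starting point. -/
noncomputable def probUniform (N : ℕ) (p : ℝ) (S : ℤ → List Bool → Prop) : ℝ :=
  (∑ x ∈ Finset.range (N + 1), prob N p (x : ℤ) (S (x : ℤ))) / (N + 1)

/-- The set of sites visited by the stopped walk up to time `τ_N` (time `0` included). -/
def rangeSet (x : ℤ) (w : List Bool) : Finset ℤ :=
  (Finset.range (w.length + 1)).image fun k => walkPos x (w.take k)

/-- The range `R_N`: the number of distinct sites visited up to the exit time. -/
def rangeCount (x : ℤ) (w : List Bool) : ℕ := (rangeSet x w).card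

/-- The local time `G(y) = Σ_{k=0}^{τ_N} 1_{X_k = y}` of the stopped trajectory `w`. -/
def localTime (x y : ℤ) (w : List Bool) : ℕ :=
  ((Finset.range (w.length + 1)).filter fun k => walkPos x (w.take k) = y).card

/-- The event `T_y < τ_N`: the walk started at `x` visits `y` at some time
`k ≥ 1` strictly before the end of the stopped trajectory `w`. -/
def hitsBefore (x y : ℤ) (w : List Bool) : Prop :=
  ∃ k, 1 ≤ k ∧ k < w.length ∧ walkPos x (w.take k) = y



open scoped ENNReal NNReal

/- step displacement -/
def stp (b : Bool) : ℤ := if b then 1 else -1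

lemma walkPos_nil (x : ℤ) : walkPos x [] = x := by simp [walkPos]

lemma walkPos_cons (x : ℤ) (b : Bool) (w : List Bool) :
    walkPos x (b :: w) = walkPos (x + stp b) w := by
  cases b <;> simp [walkPos, stp, List.count_cons] <;> ring

lemma exitPath_nil_iff (N : ℕ) (x : ℤ) : IsExitPath N x [] ↔ (x = 0 ∨ x = (N:ℤ)) := by
  simp [IsExitPath, walkPos_nil]

lemma exitPath_cons_iff (N : ℕ) (x : ℤ) (b : Bool) (w : List Bool)
    (hx0 : 0 < x) (hxN : x < (N:ℤ)) :
    IsExitPath N x (b :: w) ↔ IsExitPath N (x + stp b) w := by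
  constructor
  · rintro ⟨h1, h2⟩
    refine ⟨fun k hk => ?_, ?_⟩
    · have := h1 (k+1) (by simpa using Nat.succ_lt_succ hk)
      rwa [List.take_succ_cons, walkPos_cons] at this
    · rwa [walkPos_cons] at h2
  · rintro ⟨h1, h2⟩
    refine ⟨fun k hk => ?_, ?_⟩
    · cases k with
      | zero => simpa [walkPos_nil] using ⟨hx0, hxN⟩
      | succ j =>
        rw [List.take_succ_cons, walkPos_cons]
        exact h1 j (by simpa using Nat.lt_of_succ_lt_succ hk)
    · rwa [walkPos_cons]
      
lemma localTime_cons (x y : ℤ) (b : Bool) (w : List Bool) :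
    localTime x y (b :: w) = (if x = y then 1 else 0) + localTime (x + stp b) y w := by
  classical
  unfold localTime
  rw [Finset.card_filter, Finset.card_filter]
  simp only [List.length_cons]
  rw [Finset.sum_range_succ' (fun k => if walkPos x ((b :: w).take k) = y then 1 else 0)]
  simp only [List.take_succ_cons, walkPos_cons, List.take_zero, walkPos_nil]
  omega

noncomputable def wtE (p : ℝ) (w : List Bool) : ℝ≥0∞ :=
  ENNReal.ofReal p ^ w.count true * ENNReal.ofReal (1 - p) ^ w.count false

lemma wtE_toReal (p : ℝ) (w : List Bool) (hp0 : 0 ≤ p) (hp1 : p ≤ 1) :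
    (wtE p w).toReal = wt p w := by
  rw [wtE, wt, ENNReal.toReal_mul, ENNReal.toReal_pow, ENNReal.toReal_pow,
    ENNReal.toReal_ofReal hp0, ENNReal.toReal_ofReal (by linarith)]

lemma wtE_ne_top (p : ℝ) (w : List Bool) : wtE p w ≠ ⊤ := by
  simp [wtE, ENNReal.mul_ne_top, ENNReal.pow_ne_top, ENNReal.ofReal_ne_top]

lemma wtE_nil (p : ℝ) : wtE p [] = 1 := by simp [wtE]

lemma wtE_cons (p : ℝ) (b : Bool) (w : List Bool) :
    wtE p (b :: w) = (if b then ENNReal.ofReal p else ENNReal.ofReal (1-p)) * wtE p w := by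
  cases b <;> simp [wtE, List.count_cons, pow_succ] <;> ring

/-- cons decomposition of a tsum over lists. -/
lemma tsum_list_cons (F : List Bool → ℝ≥0∞) :
    ∑' w : List Bool, F w
      = F [] + ((∑' w : List Bool, F (false :: w)) + ∑' w : List Bool, F (true :: w)) := by
  classical
  rw [ENNReal.tsum_eq_add_tsum_ite ([] : List Bool)]
  congr 1
  trans (∑' (x : Bool × List Bool), F (x.1 :: x.2))
  · apply tsum_eq_tsum_of_ne_zero_bij (fun x => (x.1 : Bool × List Bool).1 :: x.1.2)
    · intro a b hab
      simp only at hab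
      injection hab with h1 h2
      exact Subtype.ext (Prod.ext_iff.mpr ⟨h1, h2⟩)
    · rintro w hw
      simp only [Function.mem_support, ne_eq, ite_eq_left_iff, not_forall] at hw
      obtain ⟨hne, hF⟩ := hw
      cases w with
      | nil => exact absurd rfl hne
      | cons b t => exact ⟨⟨(b, t), by simpa using hF⟩, rfl⟩
    · rintro ⟨⟨b, w⟩, -⟩
      simp
  · rw [ENNReal.tsum_prod (f := fun b w => F (b :: w))]
    rw [tsum_bool]

noncomputable def probE (N : ℕ) (p : ℝ) (x : ℤ) (S : List Bool → Prop) : ℝ≥0∞ :=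
  ∑' w : List Bool, Set.indicator {w | IsExitPath N x w ∧ S w} (wtE p) w

lemma probE_congr (N : ℕ) (p : ℝ) (x : ℤ) {S S' : List Bool → Prop}
    (h : ∀ w, S w ↔ S' w) : probE N p x S = probE N p x S' := by
  unfold probE
  congr 1
  ext w
  congr 1
  ext v
  simp [h v]

lemma prob_eq_toReal (N : ℕ) (p : ℝ) (x : ℤ) (S : List Bool → Prop)
    (hp0 : 0 ≤ p) (hp1 : p ≤ 1) : prob N p x S = (probE N p x S).toReal := by
  rw [probE, ENNReal.tsum_toReal_eq]
  · unfold prob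
    apply tsum_congr
    intro w
    by_cases h : w ∈ {w | IsExitPath N x w ∧ S w}
    · rw [Set.indicator_of_mem h, Set.indicator_of_mem h, wtE_toReal p w hp0 hp1]
    · rw [Set.indicator_of_notMem h, Set.indicator_of_notMem h, ENNReal.toReal_zero]
  · intro w
    by_cases h : w ∈ {w | IsExitPath N x w ∧ S w}
    · rw [Set.indicator_of_mem h]; exact wtE_ne_top p w
    · rw [Set.indicator_of_notMem h]; exact ENNReal.zero_ne_top

open scoped Classical in
lemma probE_boundary (N : ℕ) (p : ℝ) (x : ℤ) (S : List Bool → Prop)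
    (hx : x = 0 ∨ x = (N : ℤ)) :
    probE N p x S = if S [] then 1 else 0 := by
  classical
  rw [probE, tsum_eq_single ([] : List Bool)]
  · by_cases h : S []
    · rw [Set.indicator_of_mem (by exact ⟨(exitPath_nil_iff N x).2 hx, h⟩), wtE_nil, if_pos h]
    · rw [Set.indicator_of_notMem (fun hc => h hc.2), if_neg h]
  · intro w hw
    apply Set.indicator_of_notMem
    rintro ⟨⟨h1, h2⟩, -⟩
    cases w with
    | nil => exact hw rfl
    | cons b t =>
      have := h1 0 (by simp)
      rw [List.take_zero, walkPos_nil] at this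
      rcases hx with rfl | rfl
      · exact absurd this.1 (lt_irrefl 0)
      · exact absurd this.2 (lt_irrefl _)

lemma probE_far (N : ℕ) (p : ℝ) (x : ℤ) (S : List Bool → Prop)
    (hxi : ¬(0 < x ∧ x < (N:ℤ))) (hxb : ¬(x = 0 ∨ x = (N : ℤ))) :
    probE N p x S = 0 := by
  rw [probE]
  convert tsum_zero with w
  apply Set.indicator_of_notMem
  rintro ⟨⟨h1, h2⟩, -⟩
  cases w with
  | nil => exact hxb (by rwa [walkPos_nil] at h2)
  | cons b t =>
    have := h1 0 (by simp)
    rw [List.take_zero, walkPos_nil] at this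
    exact hxi this

lemma probE_step (N : ℕ) (p : ℝ) (x : ℤ) (S : List Bool → Prop)
    (hx0 : 0 < x) (hxN : x < (N:ℤ)) :
    probE N p x S = ENNReal.ofReal p * probE N p (x+1) (fun w => S (true :: w))
      + ENNReal.ofReal (1-p) * probE N p (x-1) (fun w => S (false :: w)) := by
  have hcons : ∀ (b : Bool) (w : List Bool),
      Set.indicator {w | IsExitPath N x w ∧ S w} (wtE p) (b :: w)
        = (if b then ENNReal.ofReal p else ENNReal.ofReal (1-p))
            * Set.indicator {w | IsExitPath N (x + stp b) w ∧ S (b :: w)} (wtE p) w := by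
    intro b w
    by_cases h : IsExitPath N (x + stp b) w ∧ S (b :: w)
    · rw [Set.indicator_of_mem (show w ∈ {w | IsExitPath N (x + stp b) w ∧ S (b :: w)} from h),
        Set.indicator_of_mem (show _ ∈ {w | IsExitPath N x w ∧ S w} from
          ⟨(exitPath_cons_iff N x b w hx0 hxN).2 h.1, h.2⟩), wtE_cons]
    · rw [Set.indicator_of_notMem (show w ∉ {w | IsExitPath N (x + stp b) w ∧ S (b :: w)} from h),
        Set.indicator_of_notMem (show (b :: w) ∉ {w | IsExitPath N x w ∧ S w} from fun hc => h
          ⟨(exitPath_cons_iff N x b w hx0 hxN).1 hc.1, hc.2⟩), mul_zero]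
  rw [probE, tsum_list_cons]
  have h0 : Set.indicator {w | IsExitPath N x w ∧ S w} (wtE p) [] = 0 := by
    apply Set.indicator_of_notMem
    rintro ⟨he, -⟩
    rcases (exitPath_nil_iff N x).1 he with rfl | rfl
    · exact absurd hx0 (lt_irrefl 0)
    · exact absurd hxN (lt_irrefl _)
  rw [h0, zero_add]
  have ht : ∑' w : List Bool,
      Set.indicator {w | IsExitPath N x w ∧ S w} (wtE p) (true :: w)
        = ENNReal.ofReal p * probE N p (x+1) (fun w => S (true :: w)) := by
    simp only [hcons, if_true]
    rw [ENNReal.tsum_mul_left, probE]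
    norm_num [stp]
  have hf : ∑' w : List Bool,
      Set.indicator {w | IsExitPath N x w ∧ S w} (wtE p) (false :: w)
        = ENNReal.ofReal (1-p) * probE N p (x-1) (fun w => S (false :: w)) := by
    simp only [hcons, if_false]
    rw [ENNReal.tsum_mul_left, probE]
    have : x + stp false = x - 1 := by simp [stp]; ring
    rw [this]
    norm_num
  rw [ht, hf, add_comm]

lemma probE_len_le_one (N : ℕ) (p : ℝ) (hp0 : 0 ≤ p) (hp1 : p ≤ 1) :
    ∀ (n : ℕ) (x : ℤ) (S : List Bool → Prop),
      probE N p x (fun w => S w ∧ w.length ≤ n) ≤ 1 := by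
  intro n
  induction n with
  | zero =>
    intro x S
    rw [probE]
    calc ∑' w : List Bool,
        Set.indicator {w | IsExitPath N x w ∧ S w ∧ w.length ≤ 0} (wtE p) w
        ≤ ∑' w : List Bool, Set.indicator {([] : List Bool)} (wtE p) w := by
          apply ENNReal.tsum_le_tsum
          intro w
          apply Set.indicator_le_indicator_of_subset
          · rintro v ⟨-, -, hv⟩
            simpa using List.length_eq_zero_iff.mp (Nat.le_zero.mp hv)
          · intro a; exact zero_le
      _ = 1 := by
          rw [tsum_eq_single ([] : List Bool)]
          · simp [wtE_nil]
          · intro w hw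
            exact Set.indicator_of_notMem (by simpa using hw) _
  | succ n ih =>
    intro x S
    by_cases hx : 0 < x ∧ x < (N:ℤ)
    · rw [probE_step N p x _ hx.1 hx.2]
      have h1 : probE N p (x+1) (fun w => S (true :: w) ∧ (true :: w).length ≤ n+1) ≤ 1 := by
        rw [probE_congr N p (x+1)
          (show ∀ w, (S (true :: w) ∧ (true :: w).length ≤ n+1)
            ↔ ((fun v => S (true :: v)) w ∧ w.length ≤ n) from fun w => by simp)]
        exact ih (x+1) _
      have h2 : probE N p (x-1) (fun w => S (false :: w) ∧ (false :: w).length ≤ n+1) ≤ 1 := by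
        rw [probE_congr N p (x-1)
          (show ∀ w, (S (false :: w) ∧ (false :: w).length ≤ n+1)
            ↔ ((fun v => S (false :: v)) w ∧ w.length ≤ n) from fun w => by simp)]
        exact ih (x-1) _
      calc ENNReal.ofReal p * probE N p (x+1) _ + ENNReal.ofReal (1-p) * probE N p (x-1) _
          ≤ ENNReal.ofReal p * 1 + ENNReal.ofReal (1-p) * 1 := by gcongr
        _ = 1 := by
            rw [mul_one, mul_one, ← ENNReal.ofReal_add hp0 (by linarith)]
            norm_num
    · by_cases hxb : x = 0 ∨ x = (N:ℤ)
      · rw [probE_boundary N p x _ hxb]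
        split_ifs <;> simp
      · rw [probE_far N p x _ hx hxb]
        exact zero_le_one

lemma probE_le_one (N : ℕ) (p : ℝ) (x : ℤ) (S : List Bool → Prop)
    (hp0 : 0 ≤ p) (hp1 : p ≤ 1) : probE N p x S ≤ 1 := by
  classical
  rw [probE, ENNReal.tsum_eq_iSup_sum]
  apply iSup_le
  intro F
  set n := F.sup List.length with hn
  calc ∑ w ∈ F, Set.indicator {w | IsExitPath N x w ∧ S w} (wtE p) w
      ≤ ∑ w ∈ F, Set.indicator {w | IsExitPath N x w ∧ S w ∧ w.length ≤ n} (wtE p) w := by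
        apply Finset.sum_le_sum
        intro w hw
        by_cases h : w ∈ {w | IsExitPath N x w ∧ S w}
        · rw [Set.indicator_of_mem h,
            Set.indicator_of_mem (show w ∈ {w | IsExitPath N x w ∧ S w ∧ w.length ≤ n} from
              ⟨h.1, h.2, Finset.le_sup hw⟩)]
        · rw [Set.indicator_of_notMem h]
          exact zero_le
    _ ≤ ∑' w : List Bool,
        Set.indicator {w | IsExitPath N x w ∧ S w ∧ w.length ≤ n} (wtE p) w :=
        ENNReal.sum_le_tsum F
    _ ≤ 1 := probE_len_le_one N p hp0 hp1 n x S

lemma probE_ne_top (N : ℕ) (p : ℝ) (x : ℤ) (S : List Bool → Prop)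
    (hp0 : 0 ≤ p) (hp1 : p ≤ 1) : probE N p x S ≠ ⊤ :=
  fun h => by simpa [h] using probE_le_one N p x S hp0 hp1

lemma probE_add (N : ℕ) (p : ℝ) (x : ℤ) (S1 S2 : List Bool → Prop)
    (h : ∀ w, ¬(S1 w ∧ S2 w)) :
    probE N p x S1 + probE N p x S2 = probE N p x (fun w => S1 w ∨ S2 w) := by
  classical
  rw [probE, probE, probE, ← ENNReal.tsum_add]
  apply tsum_congr
  intro w
  simp only [Set.indicator_apply, Set.mem_setOf_eq]
  by_cases e : IsExitPath N x w <;> by_cases h1 : S1 w <;> by_cases h2 : S2 w <;>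
    simp [e, h1, h2]
  exact absurd ⟨h1, h2⟩ (h w)

lemma maxPrinciple (p q : ℝ) (hp : 0 < p) (hq : 0 < q) (hpq : p + q = 1) (N : ℕ) (d : ℤ → ℝ)
    (h0 : d 0 = 0) (hN : d N = 0)
    (hrec : ∀ x : ℤ, 0 < x → x < N → |d x| ≤ p * |d (x+1)| + q * |d (x-1)|) :
    ∀ x : ℤ, 0 ≤ x → x ≤ N → d x = 0 := by
  obtain ⟨x0, hx0mem, hx0max⟩ := Finset.exists_max_image (Finset.Icc (0:ℤ) N)
    (fun z => |d z|) ⟨0, by simp⟩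
  rw [Finset.mem_Icc] at hx0mem
  set M := |d x0| with hMdef
  by_cases hMpos : 0 < M
  · exfalso
    have hx0ne0 : x0 ≠ 0 := fun h => by rw [h, h0] at hMdef; simp [hMdef] at hMpos
    have claim : ∀ j : ℕ, x0 + j ≤ N → |d (x0 + j)| = M := by
      intro j
      induction j with
      | zero => intro _; simpa using hMdef.symm
      | succ n ih =>
        intro hle
        have hle' : x0 + (n:ℤ) + 1 ≤ N := by push_cast at hle; omega
        have hn : x0 + (n:ℤ) ≤ N := by omega
        have hval := ih hn
        have hint0 : 0 < x0 + (n:ℤ) := by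
          have : 0 < x0 := lt_of_le_of_ne hx0mem.1 (Ne.symm hx0ne0)
          omega
        have hintN : x0 + (n:ℤ) < N := by omega
        have h1 := hrec (x0 + n) hint0 hintN
        have hb1 : |d (x0 + n + 1)| ≤ M := hx0max _ (by rw [Finset.mem_Icc]; omega)
        have hb2 : |d (x0 + n - 1)| ≤ M := hx0max _ (by rw [Finset.mem_Icc]; omega)
        have hstep : M ≤ p * |d (x0 + n + 1)| + q * M := by
          calc M = |d (x0 + n)| := hval.symm
            _ ≤ p * |d (x0 + n + 1)| + q * |d (x0 + n - 1)| := h1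
            _ ≤ p * |d (x0 + n + 1)| + q * M := by nlinarith
        have : M ≤ |d (x0 + n + 1)| := by nlinarith
        have heq : |d (x0 + n + 1)| = M := le_antisymm hb1 this
        have : x0 + ((n:ℤ) + 1) = x0 + n + 1 := by ring
        push_cast
        rw [this]
        exact heq
    have hxN : x0 + ((N - x0).toNat : ℤ) = N := by omega
    have := claim (N - x0).toNat (by omega)
    rw [hxN, hN] at this
    simp at this
    rw [← this] at hMpos
    exact lt_irrefl _ hMpos
  · intro x hx1 hx2
    have h1 : |d x| ≤ M := hx0max x (by rw [Finset.mem_Icc]; exact ⟨hx1, hx2⟩)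
    have h2 : |d x| ≤ 0 := le_trans h1 (not_lt.mp hMpos)
    exact abs_eq_zero.mp (le_antisymm h2 (abs_nonneg _))

lemma localTime_nil (x y : ℤ) : localTime x y [] = if x = y then 1 else 0 := by
  classical
  unfold localTime
  simp [walkPos_nil, Finset.filter_const]
  split_ifs <;> simp

lemma absStep (p q a b : ℝ) (hp : 0 ≤ p) (hq : 0 ≤ q) :
    |p * a + q * b| ≤ p * |a| + q * |b| := by
  calc |p * a + q * b| ≤ |p * a| + |q * b| := abs_add_le _ _
    _ = p * |a| + q * |b| := by
        rw [abs_mul, abs_mul, abs_of_nonneg hp, abs_of_nonneg hq]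

noncomputable def rho (p : ℝ) : ℝ := (1 - p) / p

noncomputable def solW (p : ℝ) (N y : ℕ) : ℝ :=
  (1 - rho p ^ y) * (rho p ^ y - rho p ^ N)
    + p * (1 - rho p ^ y) * (rho p ^ (y+1) - rho p ^ N)
    + (1 - p) * (rho p ^ y - rho p ^ N) * (1 - rho p ^ (y-1))

lemma rho_pos (p : ℝ) (hp : 1/2 < p) (hp1 : p < 1) : 0 < rho p :=
  div_pos (by linarith) (by linarith)

lemma rho_lt_one (p : ℝ) (hp : 1/2 < p) (hp1 : p < 1) : rho p < 1 :=
  (div_lt_one (by linarith)).2 (by linarith)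

lemma rho_key (p : ℝ) (hp : 1/2 < p) (hp1 : p < 1) :
    p * rho p ^ 2 + (1 - p) = rho p := by
  have hp0 : (0:ℝ) < p := by linarith
  rw [rho]
  field_simp
  ring

lemma solW_pos (p : ℝ) (hp : 1/2 < p) (hp1 : p < 1) (N y : ℕ)
    (hy0 : 0 < y) (hyN : y < N) : 0 < solW p N y := by
  have hρ0 := rho_pos p hp hp1
  have hρ1 := rho_lt_one p hp hp1
  have hu : 0 < 1 - rho p ^ y := by
    have : rho p ^ y < 1 := pow_lt_one₀ hρ0.le hρ1 (by omega)
    linarith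
  have hv : 0 < rho p ^ y - rho p ^ N := by
    have : rho p ^ N < rho p ^ y := pow_lt_pow_right_of_lt_one₀ hρ0 hρ1 hyN
    linarith
  have h2 : 0 ≤ rho p ^ (y+1) - rho p ^ N :=
    sub_nonneg.2 (pow_le_pow_of_le_one hρ0.le hρ1.le (by omega))
  have h3 : 0 ≤ 1 - rho p ^ (y-1) :=
    sub_nonneg.2 (pow_le_one₀ hρ0.le hρ1.le)
  have hp0 : (0:ℝ) < p := by linarith
  have hq0 : (0:ℝ) < 1 - p := by linarith
  unfold solW
  have t1 : 0 < (1 - rho p ^ y) * (rho p ^ y - rho p ^ N) := mul_pos hu hv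
  have t2 : 0 ≤ p * (1 - rho p ^ y) * (rho p ^ (y+1) - rho p ^ N) :=
    mul_nonneg (mul_nonneg hp0.le hu.le) h2
  have t3 : 0 ≤ (1 - p) * (rho p ^ y - rho p ^ N) * (1 - rho p ^ (y-1)) :=
    mul_nonneg (mul_nonneg hq0.le hv.le) h3
  linarith

lemma parity_formula (p : ℝ) (hp : 1/2 < p) (hp1 : p < 1) (N y : ℕ)
    (hy0 : 0 < y) (hyN : y < N) :
    ∀ x : ℤ, 0 ≤ x → x ≤ (y:ℤ) →
    prob N p x (fun w => localTime x y w % 2 = 1)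
      = (rho p ^ y - rho p ^ N) * (1 - rho p ^ x.toNat) / solW p N y := by
  classical
  have hp0 : (0:ℝ) < p := by linarith
  have hq0 : (0:ℝ) < 1 - p := by linarith
  have hpq : p + (1-p) = 1 := by ring
  set ρ := rho p with hρdef
  have hρ0 := rho_pos p hp hp1
  have hρ1 := rho_lt_one p hp hp1
  have key := rho_key p hp hp1
  have hW := solW_pos p hp hp1 N y hy0 hyN
  set W := solW p N y with hWdef
  set u := 1 - ρ^y with hudef
  set v := ρ^y - ρ^N with hvdef
  set c1 := v / W with hc1def
  set c2 := u / W with hc2def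
  -- the stochastic quantities
  set F : ℕ → ℤ → ℝ :=
    fun m x => (probE N p x (fun w => localTime x y w % 2 = m)).toReal with hFdef
  set σ : ℤ → ℝ := fun x => (probE N p x (fun _ => True)).toReal with hσdef
  have hfin : ∀ (x : ℤ) (S : List Bool → Prop), probE N p x S ≠ ⊤ :=
    fun x S => probE_ne_top N p x S hp0.le hp1.le
  have toRealStep : ∀ (x : ℤ) (S : List Bool → Prop), 0 < x → x < (N:ℤ) →
      (probE N p x S).toReal
        = p * (probE N p (x+1) (fun w => S (true :: w))).toReal
          + (1-p) * (probE N p (x-1) (fun w => S (false :: w))).toReal := by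
    intro x S hx1 hx2
    rw [probE_step N p x S hx1 hx2, ENNReal.toReal_add
        (ENNReal.mul_ne_top ENNReal.ofReal_ne_top (hfin _ _))
        (ENNReal.mul_ne_top ENNReal.ofReal_ne_top (hfin _ _)),
      ENNReal.toReal_mul, ENNReal.toReal_mul,
      ENNReal.toReal_ofReal hp0.le, ENNReal.toReal_ofReal hq0.le]
  -- σ ≡ 1 on [0,N]
  have hσb : ∀ x : ℤ, (x = 0 ∨ x = (N:ℤ)) → σ x = 1 := by
    intro x hx
    rw [hσdef]
    simp only
    rw [probE_boundary N p x _ hx, if_pos trivial, ENNReal.toReal_one]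
  have hσrec : ∀ x : ℤ, 0 < x → x < (N:ℤ) → σ x = p * σ (x+1) + (1-p) * σ (x-1) := by
    intro x hx1 hx2
    exact toRealStep x (fun _ => True) hx1 hx2
  have hσ1 : ∀ x : ℤ, 0 ≤ x → x ≤ (N:ℤ) → σ x = 1 := by
    have := maxPrinciple p (1-p) hp0 hq0 hpq N (fun z => σ z - 1)
      (by show σ 0 - 1 = 0; rw [hσb 0 (Or.inl rfl)]; ring)
      (by show σ (N:ℤ) - 1 = 0; rw [hσb N (Or.inr rfl)]; ring)
      (fun x hx1 hx2 => by
        show |σ x - 1| ≤ p * |σ (x+1) - 1| + (1-p) * |σ (x-1) - 1|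
        have hrw : σ x - 1 = p * ((σ (x+1) - 1)) + (1-p) * ((σ (x-1) - 1)) := by
          rw [hσrec x hx1 hx2]; ring
        rw [hrw]
        exact absStep p (1-p) _ _ hp0.le hq0.le)
    intro x hx1 hx2
    have h := this x hx1 hx2
    linarith
  -- recursion for F
  have hFrec : ∀ (m : ℕ), m < 2 → ∀ x : ℤ, 0 < x → x < (N:ℤ) →
      F m x = p * F ((m + if x = (y:ℤ) then 1 else 0) % 2) (x+1)
        + (1-p) * F ((m + if x = (y:ℤ) then 1 else 0) % 2) (x-1) := by
    intro m hm x hx1 hx2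
    rw [hFdef]
    simp only
    rw [toRealStep x _ hx1 hx2]
    congr 2
    · refine congrArg ENNReal.toReal (probE_congr N p _ ?_)
      intro w
      rw [localTime_cons]
      have hstp : x + stp true = x + 1 := by simp [stp]
      rw [hstp]
      split_ifs with h <;> omega
    · refine congrArg ENNReal.toReal (probE_congr N p _ ?_)
      intro w
      rw [localTime_cons]
      have hstp : x + stp false = x - 1 := by simp [stp]; ring
      rw [hstp]
      split_ifs with h <;> omega
  -- F 0 + F 1 = σ
  have hsum : ∀ z : ℤ, F 0 z + F 1 z = σ z := by
    intro z
    rw [hFdef, hσdef]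
    simp only
    rw [← ENNReal.toReal_add (hfin _ _) (hfin _ _), probE_add N p z _ _ (by intro w; omega)]
    congr 1
    apply probE_congr
    intro w
    constructor
    · intro _; trivial
    · intro _; omega
  -- boundary values of F 1
  have hF1b : ∀ x : ℤ, (x = 0 ∨ x = (N:ℤ)) → F 1 x = 0 := by
    intro x hx
    rw [hFdef]
    simp only
    rw [probE_boundary N p x _ hx]
    have hne : x ≠ (y:ℤ) := by
      rcases hx with rfl | rfl
      · intro h; exact absurd h.symm (by exact_mod_cast hy0.ne')
      · intro h
        have : (N:ℤ) ≠ (y:ℤ) := by exact_mod_cast hyN.ne'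
        exact this h
    rw [if_neg]
    · simp
    · rw [localTime_nil, if_neg hne]
      omega
  -- candidate solution
  set hcand : ℤ → ℝ := fun x =>
    if x ≤ (y:ℤ) then c1 * (1 - ρ ^ x.toNat) else c2 * (ρ ^ x.toNat - ρ ^ N) with hcanddef
  have hc0 : hcand 0 = 0 := by
    rw [hcanddef]
    simp only
    rw [if_pos (by exact_mod_cast hy0.le)]
    simp
  have hcN : hcand N = 0 := by
    rw [hcanddef]
    simp only
    rw [if_neg (by exact_mod_cast hyN.not_ge)]
    simp
  -- matching at y: both expressions agree
  have hmatch : c1 * (1 - ρ ^ y) = c2 * (ρ ^ y - ρ ^ N) := by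
    rw [hc1def, hc2def, hudef, hvdef]
    ring
  -- recursion for the candidate away from y
  have hcrec : ∀ x : ℤ, 0 < x → x < (N:ℤ) → x ≠ (y:ℤ) →
      hcand x = p * hcand (x+1) + (1-p) * hcand (x-1) := by
    intro x hx1 hx2 hxy
    rcases lt_or_gt_of_ne hxy with hlt | hgt
    · -- x < y
      set k := (x-1).toNat with hk
      have e1 : x.toNat = k + 1 := by omega
      have e2 : (x+1).toNat = k + 2 := by omega
      rw [hcanddef]
      simp only
      rw [if_pos (by omega), if_pos (by omega), if_pos (by omega), e1, e2, hk]
      have hk' : (x - 1).toNat = k := rfl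
      simp only [pow_succ]
      linear_combination (c1 * ρ ^ k) * key
    · -- x > y
      set k := (x-1).toNat with hk
      have e1 : x.toNat = k + 1 := by omega
      have e2 : (x+1).toNat = k + 2 := by omega
      have hky : (y:ℤ) ≤ k := by omega
      rw [hcanddef]
      simp only
      rw [if_neg (by omega), if_neg (by omega)]
      by_cases hxy1 : x - 1 ≤ (y:ℤ)
      · -- x = y + 1, so k = y
        have hkeq : k = y := by omega
        rw [if_pos hxy1]
        have : (x-1).toNat = y := by omega
        rw [this, e1, e2, hkeq]
        rw [show c1 * (1 - ρ ^ y) = c2 * (ρ ^ y - ρ ^ N) from hmatch]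
        simp only [pow_succ]
        linear_combination (-(c2 * ρ ^ y)) * key
      · rw [if_neg hxy1, e1, e2, hk]
        simp only [pow_succ]
        linear_combination (-(c2 * ρ ^ k)) * key
  -- the affine equation at y for the candidate
  have hcy : hcand y = 1 - p * hcand ((y:ℤ)+1) - (1-p) * hcand ((y:ℤ)-1) := by
    obtain ⟨m, rfl⟩ : ∃ m, y = m + 1 := ⟨y - 1, by omega⟩
    rw [hcanddef]
    simp only
    rw [if_pos le_rfl, if_neg (by omega), if_pos (by omega)]
    have e1 : ((m+1:ℕ):ℤ).toNat = m + 1 := by omega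
    have e2 : (((m+1:ℕ):ℤ)+1).toNat = m + 2 := by omega
    have e3 : (((m+1:ℕ):ℤ)-1).toNat = m := by omega
    rw [e1, e2, e3]
    have hWeq : W = u * v + p * u * (ρ^(m+2) - ρ^N) + (1-p) * v * (1 - ρ^m) := by
      rw [hWdef]
      unfold solW
      rw [← hρdef, hudef, hvdef]
      simp only [show m + 1 - 1 = m from rfl]
      try ring
    rw [← hudef, hc1def, hc2def]
    rw [hudef, hvdef] at hWeq
    field_simp
    linear_combination (-1 : ℝ) * hWeq
  -- F 1 equals the candidate on [0, N]
  have hF1y : F 1 (y:ℤ) = 1 - p * F 1 ((y:ℤ)+1) - (1-p) * F 1 ((y:ℤ)-1) := by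
    have h := hFrec 1 (by omega) (y:ℤ) (by exact_mod_cast hy0) (by exact_mod_cast hyN)
    rw [if_pos rfl] at h
    norm_num at h
    have hs1 : F 0 ((y:ℤ)+1) = 1 - F 1 ((y:ℤ)+1) := by
      have := hsum ((y:ℤ)+1)
      have := hσ1 ((y:ℤ)+1) (by omega) (by omega)
      linarith [hsum ((y:ℤ)+1)]
    have hs2 : F 0 ((y:ℤ)-1) = 1 - F 1 ((y:ℤ)-1) := by
      have := hσ1 ((y:ℤ)-1) (by omega) (by omega)
      linarith [hsum ((y:ℤ)-1)]
    rw [hs1, hs2] at h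
    rw [h]; ring
  have hF1rec : ∀ x : ℤ, 0 < x → x < (N:ℤ) → x ≠ (y:ℤ) →
      F 1 x = p * F 1 (x+1) + (1-p) * F 1 (x-1) := by
    intro x hx1 hx2 hxy
    have h := hFrec 1 (by omega) x hx1 hx2
    rw [if_neg hxy] at h
    norm_num at h
    exact h
  have hF1eq : ∀ x : ℤ, 0 ≤ x → x ≤ (N:ℤ) → F 1 x = hcand x := by
    have := maxPrinciple p (1-p) hp0 hq0 hpq N (fun z => F 1 z - hcand z)
      (by show F 1 0 - hcand 0 = 0; rw [hF1b 0 (Or.inl rfl), hc0]; ring)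
      (by show F 1 (N:ℤ) - hcand (N:ℤ) = 0; rw [hF1b N (Or.inr rfl), hcN]; ring)
      (fun x hx1 hx2 => by
        show |F 1 x - hcand x| ≤ p * |F 1 (x+1) - hcand (x+1)| + (1-p) * |F 1 (x-1) - hcand (x-1)|
        by_cases hxy : x = (y:ℤ)
        · rw [hxy]
          have hrw : F 1 (y:ℤ) - hcand (y:ℤ)
              = p * (-(F 1 ((y:ℤ)+1) - hcand ((y:ℤ)+1)))
                + (1-p) * (-(F 1 ((y:ℤ)-1) - hcand ((y:ℤ)-1))) := by
            rw [hF1y, hcy]; ring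
          rw [hrw]
          calc _ ≤ p * |(-(F 1 ((y:ℤ)+1) - hcand ((y:ℤ)+1)))|
                + (1-p) * |(-(F 1 ((y:ℤ)-1) - hcand ((y:ℤ)-1)))| :=
                absStep p (1-p) _ _ hp0.le hq0.le
            _ = _ := by rw [abs_neg, abs_neg]
        · have hrw : F 1 x - hcand x
              = p * (F 1 (x+1) - hcand (x+1)) + (1-p) * (F 1 (x-1) - hcand (x-1)) := by
            rw [hF1rec x hx1 hx2 hxy, hcrec x hx1 hx2 hxy]; ring
          rw [hrw]
          exact absStep p (1-p) _ _ hp0.le hq0.le)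
    intro x hx1 hx2
    have h := this x hx1 hx2
    linarith
  -- conclude
  intro x hx1 hx2
  rw [prob_eq_toReal N p x _ hp0.le hp1.le]
  have : (probE N p x fun w => localTime x (y:ℤ) w % 2 = 1).toReal = F 1 x := rfl
  rw [this, hF1eq x hx1 (by
    have : (y:ℤ) ≤ (N:ℤ) := by exact_mod_cast hyN.le
    omega)]
  rw [hcanddef]
  simp only
  rw [if_pos hx2, hc1def, hvdef]
  ring


/-- Proposition 4.3 (asymmetric case): for the walk with fixed `0 < q < p`, `p + q = 1`,
started at `⌊αN⌋` with `α < β`, the probability that `⌊βN⌋` is visited an odd number of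
times before exit tends to `1/(2 - (p - q))`. -/
theorem odd_parity_asymmetric (p q α β : ℝ) (hq : 0 < q) (hpq : q < p)
    (hsum : p + q = 1) (hα0 : 0 < α) (hαβ : α < β) (hβ1 : β < 1) :
    Tendsto (fun N : ℕ =>
        prob N p ⌊α * (N : ℝ)⌋
          fun w => localTime ⌊α * (N : ℝ)⌋ ⌊β * (N : ℝ)⌋ w % 2 = 1)
      atTop (𝓝 (1 / (2 - (p - q)))) := by
  obtain rfl : q = 1 - p := by linarith
  have hp : 1/2 < p := by linarith
  have hp1 : p < 1 := by linarith
  have hp0 : (0:ℝ) < p := by linarith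
  have hρ0 := rho_pos p hp hp1
  have hρ1 := rho_lt_one p hp hp1
  set ρ := rho p with hρdef
  have hβ0 : (0:ℝ) < β := lt_trans hα0 hαβ
  -- exponent sequences tend to infinity
  have hmono : ∀ (c : ℝ), 0 < c →
      Tendsto (fun N : ℕ => (⌊c * (N : ℝ)⌋).toNat) atTop atTop := by
    intro c hc
    refine tendsto_atTop.2 fun b => ?_
    refine eventually_atTop.2 ⟨Nat.ceil ((b:ℝ)/c), fun N hN => ?_⟩
    have h1 : ((b:ℝ)/c) ≤ N := le_trans (Nat.le_ceil _) (by exact_mod_cast hN)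
    have h2 : (b:ℝ) ≤ c * N := by rw [div_le_iff₀ hc] at h1; linarith
    have h3 : (b:ℤ) ≤ ⌊c * (N:ℝ)⌋ := Int.le_floor.2 (by exact_mod_cast h2)
    omega
  have hx := hmono α hα0
  have hy := hmono β hβ0
  have hy1 : Tendsto (fun N : ℕ => (⌊β * (N : ℝ)⌋).toNat - 1) atTop atTop := by
    refine tendsto_atTop.2 fun b => ?_
    filter_upwards [tendsto_atTop.1 hy (b+1)] with N hN
    omega
  have hNy : Tendsto (fun N : ℕ => N - (⌊β * (N : ℝ)⌋).toNat) atTop atTop := by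
    refine tendsto_atTop.2 fun b => ?_
    refine eventually_atTop.2 ⟨Nat.ceil ((b:ℝ)/(1-β)), fun N hN => ?_⟩
    have h1 : ((b:ℝ)/(1-β)) ≤ N := le_trans (Nat.le_ceil _) (by exact_mod_cast hN)
    have h2 : (b:ℝ) ≤ (1-β) * N := by rw [div_le_iff₀ (by linarith)] at h1; linarith
    have h3 : (⌊β * (N:ℝ)⌋ : ℝ) ≤ β * N := Int.floor_le _
    have h4 : (⌊β * (N:ℝ)⌋ : ℝ) + b ≤ N := by linarith
    have h5 : ⌊β * (N:ℝ)⌋ + (b:ℤ) ≤ (N:ℤ) := by exact_mod_cast h4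
    have h6 : 0 ≤ ⌊β * (N:ℝ)⌋ := Int.floor_nonneg.2 (by positivity)
    have h8 : ((⌊β * (N:ℝ)⌋.toNat : ℤ)) = ⌊β * (N:ℝ)⌋ := Int.toNat_of_nonneg h6
    omega
  have hpow : ∀ (k : ℕ → ℕ), Tendsto k atTop atTop →
      Tendsto (fun N => ρ ^ (k N)) atTop (𝓝 0) := by
    intro k hk
    exact (tendsto_pow_atTop_nhds_zero_of_lt_one hρ0.le hρ1).comp hk
  have hA := hpow _ hx
  have hB := hpow _ hy
  have hC := hpow _ hy1
  have hT := hpow _ hNy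
  -- the rewritten expression and its limit
  set den : ℕ → ℝ := fun N =>
    (1 - ρ ^ (⌊β * (N : ℝ)⌋).toNat) * (1 - ρ ^ (N - (⌊β * (N : ℝ)⌋).toNat))
      + p * ((1 - ρ ^ (⌊β * (N : ℝ)⌋).toNat) * (ρ - ρ ^ (N - (⌊β * (N : ℝ)⌋).toNat)))
      + (1-p) * ((1 - ρ ^ (N - (⌊β * (N : ℝ)⌋).toNat)) * (1 - ρ ^ ((⌊β * (N : ℝ)⌋).toNat - 1)))
    with hden_def
  have hden : Tendsto den atTop
      (𝓝 ((1 - 0) * (1 - 0) + p * ((1 - 0) * (ρ - 0)) + (1-p) * ((1 - 0) * (1 - 0)))) := by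
    have t1 : Tendsto (fun N : ℕ => (1 - ρ ^ (⌊β * (N : ℝ)⌋).toNat)
        * (1 - ρ ^ (N - (⌊β * (N : ℝ)⌋).toNat))) atTop (𝓝 ((1-0)*(1-0))) :=
      (tendsto_const_nhds.sub hB).mul (tendsto_const_nhds.sub hT)
    have t2 : Tendsto (fun N : ℕ => p * ((1 - ρ ^ (⌊β * (N : ℝ)⌋).toNat)
        * (ρ - ρ ^ (N - (⌊β * (N : ℝ)⌋).toNat)))) atTop (𝓝 (p * ((1-0)*(ρ-0)))) :=
      ((tendsto_const_nhds.sub hB).mul (tendsto_const_nhds.sub hT)).const_mul p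
    have t3 : Tendsto (fun N : ℕ => (1-p) * ((1 - ρ ^ (N - (⌊β * (N : ℝ)⌋).toNat))
        * (1 - ρ ^ ((⌊β * (N : ℝ)⌋).toNat - 1)))) atTop (𝓝 ((1-p) * ((1-0)*(1-0)))) :=
      ((tendsto_const_nhds.sub hT).mul (tendsto_const_nhds.sub hC)).const_mul (1-p)
    exact (t1.add t2).add t3
  have hnum : Tendsto (fun N : ℕ => (1 - ρ ^ (N - (⌊β * (N : ℝ)⌋).toNat))
      * (1 - ρ ^ (⌊α * (N : ℝ)⌋).toNat)) atTop (𝓝 ((1-0)*(1-0))) :=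
    (tendsto_const_nhds.sub hT).mul (tendsto_const_nhds.sub hA)
  have hpρ : p * ρ = 1 - p := by
    rw [hρdef, rho]
    field_simp
  have hval : ((1:ℝ) - 0) * (1 - 0) + p * ((1 - 0) * (ρ - 0)) + (1-p) * ((1 - 0) * (1 - 0))
      = 2 - (p - (1-p)) := by
    nlinarith [hpρ]
  have hne : ((1:ℝ) - 0) * (1 - 0) + p * ((1 - 0) * (ρ - 0)) + (1-p) * ((1 - 0) * (1 - 0)) ≠ 0 := by
    rw [hval]; intro h; nlinarith
  have hG := hnum.div hden hne
  rw [hval] at hG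
  rw [show ((1:ℝ) - 0) * (1 - 0) = 1 by norm_num] at hG
  refine hG.congr' ?_
  have hx1ev := hx.eventually_ge_atTop 1
  have hy1ev := hy.eventually_ge_atTop 1
  have hNyev := hNy.eventually_ge_atTop 1
  filter_upwards [hx1ev, hy1ev, hNyev] with N h1 h2 h3
  set y := (⌊β * (N : ℝ)⌋).toNat with hydef
  have hy0 : 0 < y := h2
  have hyN : y < N := by omega
  have hfl0 : 0 ≤ ⌊α * (N:ℝ)⌋ := by omega
  have hcast : ((y:ℕ):ℤ) = ⌊β * (N:ℝ)⌋ := by omega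
  have hflxy : ⌊α * (N:ℝ)⌋ ≤ ((y:ℕ):ℤ) := by
    rw [hcast]
    exact Int.floor_le_floor (mul_le_mul_of_nonneg_right hαβ.le (Nat.cast_nonneg N))
  have hsplit : ρ^N = ρ^y * ρ^(N-y) := by rw [← pow_add]; congr 1; omega
  have hnum_eq : ρ^y - ρ^N = ρ^y * (1 - ρ^(N-y)) := by rw [hsplit]; ring
  have hsolW : solW p N y = ρ^y * den N := by
    rw [hden_def]
    unfold solW
    rw [← hρdef, hsplit]
    ring
  calc (1 - ρ ^ (N - y)) * (1 - ρ ^ (⌊α * (N : ℝ)⌋).toNat) / den N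
      = (ρ^y - ρ^N) * (1 - ρ ^ (⌊α * (N : ℝ)⌋).toNat) / solW p N y := by
        rw [hnum_eq, hsolW, mul_assoc, mul_div_mul_left _ _ (pow_ne_zero y hρ0.ne')]
    _ = prob N p ⌊α * (N:ℝ)⌋ (fun w => localTime ⌊α * (N:ℝ)⌋ ((y:ℕ):ℤ) w % 2 = 1) :=
        (parity_formula p hp hp1 N y hy0 hyN ⌊α * (N:ℝ)⌋ hfl0 hflxy).symm
    _ = prob N p ⌊α * (N:ℝ)⌋ (fun w => localTime ⌊α * (N:ℝ)⌋ ⌊β * (N:ℝ)⌋ w % 2 = 1) := by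
        rw [hcast]
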